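/- arXiv:2402.02731 — 7 statements merged into one kernel-verified Lean document; each statement's English description precedes it below -/
import Mathlib

section
/- For fixed probability vector q ∈ Δ^N_+ and α ∈ R_+ \ {1}, the function x ↦ D_α(q‖x) = (1/(α-1)) log⟨q^α, x^{1-α}⟩ on R^N_{++} is geodesically |1−α|-smooth with respect to the Poincaré metric: along any Poincaré geodesic γ(t) = x^{1-t} ⊙ y^t the composition t ↦ D_α(q‖γ(t)) has second derivative bounded by |1−α| · d(x,y)². -/
open scoped BigOperators

private lemma aux_hasDerivAt (a k s : ℝ) :
    HasDerivAt (fun s : ℝ => a * Real.exp (k * s)) (a * k * Real.exp (k * s)) s := by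
  have h1 : HasDerivAt (fun s : ℝ => k * s) k s := by
    simpa using (hasDerivAt_id s).const_mul k
  have h2 : HasDerivAt (fun s : ℝ => Real.exp (k * s)) (Real.exp (k * s) * k) s :=
    (Real.hasDerivAt_exp (k * s)).comp s h1
  have := h2.const_mul a
  simpa [mul_comm, mul_assoc, mul_left_comm] using this

/-- For a fixed probability vector `q` and `α ∈ ℝ₊ \ {1}`, the Rényi divergence
`x ↦ D_α(q‖x)` is geodesically `|1-α|`-smooth w.r.t. the Poincaré metric: along the geodesic
`γ t = x^(1-t) ⊙ y^t`, the second derivative of `t ↦ D_α(q‖γ t)` is bounded by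
`|1-α| * ‖log (y ⊘ x)‖₂²`. -/
theorem stmt_6 (N : ℕ) (α : ℝ) (hα : 0 < α) (hα1 : α ≠ 1)
    (q : Fin N → ℝ) (hq : ∀ i, 0 < q i) (hq1 : ∑ i, q i = 1)
    (x y : Fin N → ℝ) (hx : ∀ i, 0 < x i) (hy : ∀ i, 0 < y i) (t : ℝ) :
    |deriv (deriv fun s : ℝ =>
        (α - 1)⁻¹ * Real.log (∑ i, q i ^ α * (x i ^ (1 - s) * y i ^ s) ^ (1 - α))) t|
      ≤ |1 - α| * ∑ i, Real.log (y i / x i) ^ 2 := by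
  classical
  rcases Nat.eq_zero_or_pos N with hN | hN
  · exfalso; subst hN; simpa using hq1
  haveI : Nonempty (Fin N) := ⟨⟨0, hN⟩⟩
  set c : Fin N → ℝ := fun i => q i ^ α * x i ^ (1 - α) with hc
  set b : Fin N → ℝ := fun i => (1 - α) * Real.log (y i / x i) with hb
  have hcpos : ∀ i, 0 < c i := fun i =>
    mul_pos (Real.rpow_pos_of_pos (hq i) α) (Real.rpow_pos_of_pos (hx i) _)
  set g : ℝ → ℝ := fun s => ∑ i, c i * Real.exp (b i * s) with hgdef
  set g1 : ℝ → ℝ := fun s => ∑ i, c i * b i * Real.exp (b i * s) with hg1def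
  set g2 : ℝ → ℝ := fun s => ∑ i, c i * b i * b i * Real.exp (b i * s) with hg2def
  have hgpos : ∀ s, 0 < g s := fun s =>
    Finset.sum_pos (fun i _ => mul_pos (hcpos i) (Real.exp_pos _)) Finset.univ_nonempty
  have hg : ∀ s, HasDerivAt g (g1 s) s := by
    intro s
    exact HasDerivAt.fun_sum fun i _ => aux_hasDerivAt (c i) (b i) s
  have hg1 : ∀ s, HasDerivAt g1 (g2 s) s := by
    intro s
    exact HasDerivAt.fun_sum fun i _ => aux_hasDerivAt (c i * b i) (b i) s
  -- rewrite the function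
  have hEq : (fun s : ℝ =>
      (α - 1)⁻¹ * Real.log (∑ i, q i ^ α * (x i ^ (1 - s) * y i ^ s) ^ (1 - α)))
      = fun s => (α - 1)⁻¹ * Real.log (g s) := by
    funext s
    congr 1
    congr 1
    apply Finset.sum_congr rfl
    intro i _
    have hxp := hx i
    have hyp := hy i
    have hx1 : (0:ℝ) < x i ^ (1 - s) := Real.rpow_pos_of_pos hxp _
    have hy1 : (0:ℝ) < y i ^ s := Real.rpow_pos_of_pos hyp _
    rw [Real.rpow_def_of_pos (mul_pos hx1 hy1), Real.log_mul hx1.ne' hy1.ne',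
      Real.log_rpow hxp, Real.log_rpow hyp]
    simp only [hc, hb]
    rw [Real.rpow_def_of_pos hxp (1 - α), Real.log_div hyp.ne' hxp.ne', mul_assoc,
      ← Real.exp_add]
    congr 1
    exact congrArg Real.exp (by ring)
  rw [hEq]
  have hderiv1 : (deriv fun s => (α - 1)⁻¹ * Real.log (g s))
      = fun s => (α - 1)⁻¹ * (g1 s / g s) := by
    funext s
    exact (((hg s).log (hgpos s).ne').const_mul _).deriv
  rw [hderiv1]
  have hderiv2 : HasDerivAt (fun s => (α - 1)⁻¹ * (g1 s / g s))
      ((α - 1)⁻¹ * ((g2 t * g t - g1 t * g1 t) / g t ^ 2)) t :=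
    (((hg1 t).div (hg t) (hgpos t).ne')).const_mul _
  rw [hderiv2.deriv]
  -- bounds
  set B : ℝ := ∑ j, b j ^ 2 with hB
  have hCS : g1 t * g1 t ≤ g t * g2 t := by
    have key : (∑ i, Real.sqrt (c i * Real.exp (b i * t)) *
        (b i * Real.sqrt (c i * Real.exp (b i * t)))) ^ 2 ≤
        (∑ i, Real.sqrt (c i * Real.exp (b i * t)) ^ 2) *
        (∑ i, (b i * Real.sqrt (c i * Real.exp (b i * t))) ^ 2) :=
      Finset.sum_mul_sq_le_sq_mul_sq Finset.univ _ _
    have hsq : ∀ i, Real.sqrt (c i * Real.exp (b i * t)) ^ 2 = c i * Real.exp (b i * t) :=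
      fun i => Real.sq_sqrt (mul_pos (hcpos i) (Real.exp_pos _)).le
    calc g1 t * g1 t = (∑ i, Real.sqrt (c i * Real.exp (b i * t)) *
          (b i * Real.sqrt (c i * Real.exp (b i * t)))) ^ 2 := by
          rw [sq]
          congr 1 <;>
          · apply Finset.sum_congr rfl
            intro i _
            rw [show Real.sqrt (c i * Real.exp (b i * t)) *
                (b i * Real.sqrt (c i * Real.exp (b i * t)))
                = b i * Real.sqrt (c i * Real.exp (b i * t)) ^ 2 from by ring, hsq i]
            ring
      _ ≤ (∑ i, Real.sqrt (c i * Real.exp (b i * t)) ^ 2) *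
          (∑ i, (b i * Real.sqrt (c i * Real.exp (b i * t))) ^ 2) := key
      _ = g t * g2 t := by
          congr 1
          · exact Finset.sum_congr rfl fun i _ => hsq i
          · apply Finset.sum_congr rfl
            intro i _
            rw [mul_pow, hsq i]; ring
  have hb2B : ∀ i, b i ^ 2 ≤ B := by
    intro i
    exact Finset.single_le_sum (fun j _ => sq_nonneg (b j)) (Finset.mem_univ i)
  have hg2B : g2 t ≤ B * g t := by
    rw [hgdef]
    simp only
    rw [Finset.mul_sum]
    apply Finset.sum_le_sum
    intro i _
    have h1 : c i * b i * b i * Real.exp (b i * t) = b i ^ 2 * (c i * Real.exp (b i * t)) := by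
      ring
    rw [h1]
    have := mul_pos (hcpos i) (Real.exp_pos (b i * t))
    calc b i ^ 2 * (c i * Real.exp (b i * t)) ≤ B * (c i * Real.exp (b i * t)) := by
          exact mul_le_mul_of_nonneg_right (hb2B i) this.le
      _ = B * (c i * Real.exp (b i * t)) := rfl
  have hgt := hgpos t
  have hEnonneg : 0 ≤ (g2 t * g t - g1 t * g1 t) / g t ^ 2 := by
    apply div_nonneg _ (sq_nonneg _)
    nlinarith [hCS]
  have hEle : (g2 t * g t - g1 t * g1 t) / g t ^ 2 ≤ B := by
    rw [div_le_iff₀ (by positivity)]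
    have hg1sq : 0 ≤ g1 t * g1 t := mul_self_nonneg _
    nlinarith [hg2B, hgt, hg1sq]
  have hBnonneg : 0 ≤ B := Finset.sum_nonneg fun j _ => sq_nonneg (b j)
  have habs : |(α - 1)⁻¹ * ((g2 t * g t - g1 t * g1 t) / g t ^ 2)|
      ≤ |α - 1|⁻¹ * B := by
    rw [abs_mul, abs_inv]
    apply mul_le_mul_of_nonneg_left _ (by positivity)
    rw [abs_of_nonneg hEnonneg]
    exact hEle
  refine habs.trans_eq ?_
  have hBeq : B = (1 - α) ^ 2 * ∑ i, Real.log (y i / x i) ^ 2 := by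
    rw [hB, Finset.mul_sum]
    apply Finset.sum_congr rfl
    intro i _
    simp only [hb]; ring
  have hne : |1 - α| ≠ 0 := by
    simp only [ne_eq, abs_eq_zero, sub_eq_zero]
    exact fun h => hα1 h.symm
  rw [hBeq, abs_sub_comm α 1, ← sq_abs (1 - α)]
  generalize (∑ i, Real.log (y i / x i) ^ 2) = S
  rw [sq, ← mul_assoc, ← mul_assoc, inv_mul_cancel₀ hne, one_mul]
end

section
/- The function f_α(x) = E_p[D_α(p‖x)] is geodesically |1−α|-smooth on R^N_{++} with respect to the Poincaré metric: for all x, y ∈ R^N_{++}, f_α(y) ≤ f_α(x) + ⟨grad f_α(x), log(y⊘x)⟩ + (|1−α|/2)‖log(y⊘x)‖₂², where grad f_α(x) = x² ⊙ ∇f_α(x) and the pairing is the Poincaré inner product at x. -/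
open scoped BigOperators

/-- `f_α(x) = E_p[D_α(p‖x)]` for a random probability vector `p` taking finitely many
values `p k` with probabilities `w k`, where
`D_α(q‖x) = (α-1)⁻¹ * log ⟨q^α, x^(1-α)⟩` (entrywise real powers). -/
noncomputable def falpha {N M : ℕ} (α : ℝ) (w : Fin M → ℝ) (p : Fin M → Fin N → ℝ)
    (x : Fin N → ℝ) : ℝ :=
  ∑ k, w k * ((α - 1)⁻¹ * Real.log (∑ i, p k i ^ α * x i ^ (1 - α)))


lemma mgf_core {n : ℕ} (σ u : Fin n → ℝ) (hσ : ∀ i, 0 < σ i) (hσ1 : ∑ i, σ i = 1) (t : ℝ) :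
    Real.log (∑ i, σ i * Real.exp (t * u i)) ≤
      t * (∑ i, σ i * u i) + t ^ 2 / 2 * ∑ i, u i ^ 2 := by
  have hn : n ≠ 0 := by rintro rfl; simp at hσ1
  haveI : NeZero n := ⟨hn⟩
  set F : ℝ → ℝ := fun s => ∑ i, σ i * Real.exp (s * u i) with hF_def
  set F' : ℝ → ℝ := fun s => ∑ i, σ i * u i * Real.exp (s * u i) with hF'_def
  set m : ℝ := ∑ i, σ i * u i with hm_def
  set Q : ℝ := ∑ i, u i ^ 2 with hQ_def
  have hFpos : ∀ s, 0 < F s := fun s =>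
    Finset.sum_pos (fun i _ => mul_pos (hσ i) (Real.exp_pos _)) Finset.univ_nonempty
  have hF' : ∀ s, HasDerivAt F (F' s) s := by
    intro s
    have : ∀ i ∈ Finset.univ, HasDerivAt (fun s : ℝ => σ i * Real.exp (s * u i))
        (σ i * u i * Real.exp (s * u i)) s := by
      intro i _
      have h1 : HasDerivAt (fun s : ℝ => s * u i) (u i) s := hasDerivAt_mul_const (u i)
      have := (h1.exp.const_mul (σ i))
      exact this.congr_deriv (by ring)
    exact HasDerivAt.fun_sum this
  have hF'' : ∀ s, HasDerivAt F' (∑ i, σ i * u i ^ 2 * Real.exp (s * u i)) s := by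
    intro s
    have : ∀ i ∈ Finset.univ, HasDerivAt (fun s : ℝ => σ i * u i * Real.exp (s * u i))
        (σ i * u i ^ 2 * Real.exp (s * u i)) s := by
      intro i _
      have h1 : HasDerivAt (fun s : ℝ => s * u i) (u i) s := hasDerivAt_mul_const (u i)
      have := (h1.exp.const_mul (σ i * u i))
      exact this.congr_deriv (by ring)
    exact HasDerivAt.fun_sum this
  set G : ℝ → ℝ := fun s => s * m + s ^ 2 / 2 * Q - Real.log (F s) with hG_def
  set G' : ℝ → ℝ := fun s => m + s * Q - F' s / F s with hG'_def
  have hG' : ∀ s, HasDerivAt G (G' s) s := by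
    intro s
    have hlog : HasDerivAt (fun s => Real.log (F s)) (F' s / F s) s :=
      (hF' s).log (hFpos s).ne'
    have h1 : HasDerivAt (fun s : ℝ => s * m + s ^ 2 / 2 * Q) (m + s * Q) s := by
      have := ((hasDerivAt_id s).mul_const m).add
        ((((hasDerivAt_pow 2 s)).div_const 2).mul_const Q)
      exact this.congr_deriv (by norm_num)
    exact h1.sub hlog
  have hG'' : ∀ s, HasDerivAt G'
      (Q - ((∑ i, σ i * u i ^ 2 * Real.exp (s * u i)) * F s - F' s * F' s) / (F s) ^ 2) s := by
    intro s
    have hdiv : HasDerivAt (fun s => F' s / F s)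
        (((∑ i, σ i * u i ^ 2 * Real.exp (s * u i)) * F s - F' s * F' s) / (F s) ^ 2) s :=
      (hF'' s).div (hF' s) (hFpos s).ne'
    have h1 : HasDerivAt (fun s : ℝ => m + s * Q) Q s := by
      have := (hasDerivAt_const s m).add ((hasDerivAt_id s).mul_const Q)
      exact this.congr_deriv (by ring)
    exact h1.sub hdiv
  have hG''nonneg : ∀ s, 0 ≤ Q - ((∑ i, σ i * u i ^ 2 * Real.exp (s * u i)) * F s - F' s * F' s) / (F s) ^ 2 := by
    intro s
    rw [sub_nonneg, div_le_iff₀ (pow_pos (hFpos s) 2)]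
    have hFF : ∑ i, σ i * u i ^ 2 * Real.exp (s * u i) ≤ Q * F s := by
      rw [hQ_def, Finset.sum_mul]
      refine Finset.sum_le_sum fun i _ => ?_
      have h1 : σ i * Real.exp (s * u i) ≤ F s :=
        Finset.single_le_sum (f := fun i => σ i * Real.exp (s * u i))
          (fun j _ => mul_pos (hσ j) (Real.exp_pos _) |>.le) (Finset.mem_univ i)
      calc σ i * u i ^ 2 * Real.exp (s * u i) = u i ^ 2 * (σ i * Real.exp (s * u i)) := by ring
        _ ≤ u i ^ 2 * F s := by nlinarith [sq_nonneg (u i)]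
    nlinarith [sq_nonneg (F' s), (hFpos s)]
  have hG'mono : Monotone G' :=
    monotone_of_deriv_nonneg (fun s => (hG'' s).differentiableAt)
      (fun s => by rw [(hG'' s).deriv]; exact hG''nonneg s)
  have hG'0 : G' 0 = 0 := by
    have hF0 : F 0 = 1 := by simp [hF_def, hσ1]
    have hF'0 : F' 0 = m := by simp [hF'_def, hm_def]
    simp [hG'_def, hF0, hF'0]
  have hG0 : G 0 = 0 := by
    have hF0 : F 0 = 1 := by simp [hF_def, hσ1]
    simp [hG_def, hF0]
  have key : 0 ≤ G t := by
    rcases le_or_gt 0 t with ht | ht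
    · have hmono : MonotoneOn G (Set.Icc 0 t) := by
        apply monotoneOn_of_deriv_nonneg (convex_Icc 0 t)
          (fun s _ => (hG' s).continuousAt.continuousWithinAt)
          (fun s _ => ((hG' s).differentiableAt).differentiableWithinAt)
        intro s hs
        rw [(hG' s).deriv]
        rw [interior_Icc] at hs
        have := hG'mono hs.1.le
        rw [hG'0] at this
        linarith
      have := hmono (Set.left_mem_Icc.2 ht) (Set.right_mem_Icc.2 ht) ht
      rw [hG0] at this; exact this
    · have hmono : AntitoneOn G (Set.Icc t 0) := by
        apply antitoneOn_of_deriv_nonpos (convex_Icc t 0)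
          (fun s _ => (hG' s).continuousAt.continuousWithinAt)
          (fun s _ => ((hG' s).differentiableAt).differentiableWithinAt)
        intro s hs
        rw [(hG' s).deriv]
        rw [interior_Icc] at hs
        have := hG'mono hs.2.le
        rw [hG'0] at this
        linarith
      have := hmono (Set.left_mem_Icc.2 ht.le) (Set.right_mem_Icc.2 ht.le) ht.le
      rw [hG0] at this; exact this
  have : Real.log (F t) ≤ t * m + t ^ 2 / 2 * Q := by
    rw [hG_def] at key; simp only at key; linarith
  exact this


lemma falpha_hasFDerivAt {N M : ℕ} (α : ℝ) (w : Fin M → ℝ)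
    (p : Fin M → Fin N → ℝ) (hp : ∀ k i, 0 < p k i)
    (x : Fin N → ℝ) (hx : ∀ i, 0 < x i) (hN : N ≠ 0) :
    HasFDerivAt (falpha α w p)
      (∑ k, w k • ((α - 1)⁻¹ • ((∑ j, p k j ^ α * x j ^ (1 - α))⁻¹ •
        (∑ j, (p k j ^ α * ((1 - α) * x j ^ (1 - α - 1))) •
          (ContinuousLinearMap.proj j : (Fin N → ℝ) →L[ℝ] ℝ))))) x := by
  haveI : NeZero N := ⟨hN⟩
  apply HasFDerivAt.fun_sum
  intro k _
  have hS : (0:ℝ) < ∑ j, p k j ^ α * x j ^ (1 - α) :=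
    Finset.sum_pos (fun j _ => mul_pos (Real.rpow_pos_of_pos (hp k j) _)
      (Real.rpow_pos_of_pos (hx j) _)) Finset.univ_nonempty
  have hSd : HasFDerivAt (fun x : Fin N → ℝ => ∑ j, p k j ^ α * x j ^ (1 - α))
      (∑ j, (p k j ^ α * ((1 - α) * x j ^ (1 - α - 1))) •
        (ContinuousLinearMap.proj j : (Fin N → ℝ) →L[ℝ] ℝ)) x := by
    apply HasFDerivAt.fun_sum
    intro j _
    have hg : HasDerivAt (fun t : ℝ => p k j ^ α * t ^ (1 - α))
        (p k j ^ α * ((1 - α) * x j ^ (1 - α - 1))) (x j) :=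
      (Real.hasDerivAt_rpow_const (Or.inl (hx j).ne')).const_mul _
    have hf : HasFDerivAt (fun x : Fin N → ℝ => x j)
        (ContinuousLinearMap.proj j : (Fin N → ℝ) →L[ℝ] ℝ) x :=
      (ContinuousLinearMap.proj (R := ℝ) (φ := fun _ : Fin N => ℝ) j).hasFDerivAt
    exact HasDerivAt.comp_hasFDerivAt (h₂ := fun t : ℝ => p k j ^ α * t ^ (1 - α))
      (f := fun x : Fin N → ℝ => x j) x hg hf
  exact (((hSd.log hS.ne').const_mul ((α - 1)⁻¹)).const_mul (w k))

lemma falpha_fderiv_apply {N M : ℕ} (α : ℝ) (w : Fin M → ℝ)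
    (p : Fin M → Fin N → ℝ) (hp : ∀ k i, 0 < p k i)
    (x : Fin N → ℝ) (hx : ∀ i, 0 < x i) (i : Fin N) :
    fderiv ℝ (falpha α w p) x (Pi.single i 1)
      = ∑ k, w k * ((α - 1)⁻¹ * ((∑ j, p k j ^ α * x j ^ (1 - α))⁻¹ *
          (p k i ^ α * ((1 - α) * x i ^ (1 - α - 1))))) := by
  have hN : N ≠ 0 := by rintro rfl; exact i.elim0
  rw [(falpha_hasFDerivAt α w p hp x hx hN).fderiv]
  simp [ContinuousLinearMap.sum_apply, Pi.single_apply, Finset.sum_ite_eq',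
    mul_comm, mul_assoc, mul_left_comm]


/-- `f_α` is geodesically `|1-α|`-smooth on the positive orthant w.r.t. the Poincaré metric:
`f_α(y) ≤ f_α(x) + ⟨grad f_α(x), exp_x⁻¹ y⟩_x + (|1-α|/2) ‖log (y ⊘ x)‖₂²`, where the
Poincaré pairing of the Riemannian gradient with `exp_x⁻¹ y = x ⊙ log (y ⊘ x)` equals
`∑ i, x i * ∂ᵢ f_α(x) * log (y i / x i)`. -/
theorem stmt_7 (N M : ℕ) (α : ℝ) (hα : 0 < α) (hα1 : α ≠ 1)
    (w : Fin M → ℝ) (hw : ∀ k, 0 ≤ w k) (hw1 : ∑ k, w k = 1)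
    (p : Fin M → Fin N → ℝ) (hp : ∀ k, (∀ i, 0 < p k i) ∧ ∑ i, p k i = 1)
    (x y : Fin N → ℝ) (hx : ∀ i, 0 < x i) (hy : ∀ i, 0 < y i) :
    falpha α w p y ≤ falpha α w p x
      + ∑ i, x i * fderiv ℝ (falpha α w p) x (Pi.single i 1) * Real.log (y i / x i)
      + (|1 - α| / 2) * ∑ i, Real.log (y i / x i) ^ 2 := by
  have hp' : ∀ k i, 0 < p k i := fun k i => (hp k).1 i
  set u : Fin N → ℝ := fun i => Real.log (y i / x i) with hu_def
  set S : Fin M → ℝ := fun k => ∑ j, p k j ^ α * x j ^ (1 - α) with hS_def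
  have hα1' : α - 1 ≠ 0 := sub_ne_zero.2 hα1
  have hSpos : ∀ k, 0 < S k := by
    intro k
    have hN : N ≠ 0 := by
      rintro rfl
      simpa using (hp k).2
    haveI : NeZero N := ⟨hN⟩
    exact Finset.sum_pos (fun j _ => mul_pos (Real.rpow_pos_of_pos (hp' k j) _)
      (Real.rpow_pos_of_pos (hx j) _)) Finset.univ_nonempty
  -- per-k inequality
  have hk : ∀ k : Fin M,
      (α - 1)⁻¹ * Real.log (∑ i, p k i ^ α * y i ^ (1 - α)) ≤
        (α - 1)⁻¹ * Real.log (S k)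
          + (-(S k)⁻¹ * ∑ i, p k i ^ α * x i ^ (1 - α) * u i)
          + (|1 - α| / 2) * ∑ i, u i ^ 2 := by
    intro k
    have hN : N ≠ 0 := by rintro rfl; simpa using (hp k).2
    haveI : NeZero N := ⟨hN⟩
    set σ : Fin N → ℝ := fun i => p k i ^ α * x i ^ (1 - α) / S k with hσ_def
    have hσpos : ∀ i, 0 < σ i := fun i =>
      div_pos (mul_pos (Real.rpow_pos_of_pos (hp' k i) _) (Real.rpow_pos_of_pos (hx i) _))
        (hSpos k)
    have hσ1 : ∑ i, σ i = 1 := by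
      rw [hσ_def]
      rw [← Finset.sum_div]
      exact div_self (hSpos k).ne'
    have hyx : ∀ i, y i ^ (1 - α) = x i ^ (1 - α) * Real.exp ((1 - α) * u i) := by
      intro i
      have hui : u i = Real.log (y i) - Real.log (x i) := Real.log_div (hy i).ne' (hx i).ne'
      rw [hui, Real.rpow_def_of_pos (hy i), Real.rpow_def_of_pos (hx i), ← Real.exp_add]
      congr 1
      ring
    have hrw : ∑ i, p k i ^ α * y i ^ (1 - α) = S k * ∑ i, σ i * Real.exp ((1 - α) * u i) := by
      rw [Finset.mul_sum]
      refine Finset.sum_congr rfl fun i _ => ?_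
      rw [hyx i, hσ_def]
      field_simp
      rw [eq_div_iff (hSpos k).ne']
    have hEpos : 0 < ∑ i, σ i * Real.exp ((1 - α) * u i) :=
      Finset.sum_pos (fun i _ => mul_pos (hσpos i) (Real.exp_pos _)) Finset.univ_nonempty
    have hσu : ∑ i, σ i * u i = (S k)⁻¹ * ∑ i, p k i ^ α * x i ^ (1 - α) * u i := by
      rw [Finset.mul_sum]
      refine Finset.sum_congr rfl fun i _ => ?_
      rw [hσ_def]
      field_simp
    rw [hrw, Real.log_mul (hSpos k).ne' hEpos.ne', mul_add]
    have key : (α - 1)⁻¹ * Real.log (∑ i, σ i * Real.exp ((1 - α) * u i)) ≤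
        -(∑ i, σ i * u i) + (|1 - α| / 2) * ∑ i, u i ^ 2 := by
      rcases lt_or_gt_of_ne hα1 with h1 | h1
      · -- α < 1 : Jensen lower bound on log-sum-exp, (α-1)⁻¹ < 0
        have hβ : 0 < 1 - α := by linarith
        have hJ : Real.exp (∑ i, σ i • ((1 - α) * u i)) ≤
            ∑ i, σ i • Real.exp ((1 - α) * u i) :=
          convexOn_exp.map_sum_le (fun i _ => (hσpos i).le) hσ1 (fun i _ => trivial)
        simp only [smul_eq_mul] at hJ
        have hsum : ∑ i, σ i * ((1 - α) * u i) = (1 - α) * ∑ i, σ i * u i := by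
          rw [Finset.mul_sum]; exact Finset.sum_congr rfl fun i _ => by ring
        rw [hsum] at hJ
        have hlog : (1 - α) * ∑ i, σ i * u i ≤
            Real.log (∑ i, σ i * Real.exp ((1 - α) * u i)) := by
          rw [Real.le_log_iff_exp_le hEpos]
          exact hJ
        have hinv : (α - 1)⁻¹ < 0 := inv_lt_zero.2 (by linarith)
        have hQ : 0 ≤ (|1 - α| / 2) * ∑ i, u i ^ 2 := by
          apply mul_nonneg (by positivity)
          exact Finset.sum_nonneg fun i _ => sq_nonneg _
        have hm := mul_le_mul_of_nonpos_left hlog hinv.le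
        have hc : (α - 1)⁻¹ * ((1 - α) * ∑ i, σ i * u i) = -(∑ i, σ i * u i) := by
          field_simp
          ring
        rw [hc] at hm
        linarith
      · -- α > 1 : upper bound on mgf, (α-1)⁻¹ > 0
        have hcore := mgf_core σ u hσpos hσ1 (1 - α)
        have hinv : 0 < (α - 1)⁻¹ := inv_pos.2 (by linarith)
        have habs : |1 - α| = α - 1 := by
          rw [abs_of_neg (by linarith : (1:ℝ) - α < 0)]; ring
        have := mul_le_mul_of_nonneg_left hcore hinv.le
        rw [habs]
        have hid : (α - 1)⁻¹ * ((1 - α) * (∑ i, σ i * u i)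
            + (1 - α) ^ 2 / 2 * ∑ i, u i ^ 2)
            = -(∑ i, σ i * u i) + ((α - 1) / 2) * ∑ i, u i ^ 2 := by
          field_simp
          ring
        linarith [hid ▸ this]
    rw [hσu] at key
    linarith
  -- middle term identity
  have hmid : ∑ i, x i * fderiv ℝ (falpha α w p) x (Pi.single i 1) * u i
      = ∑ k, w k * (-(S k)⁻¹ * ∑ i, p k i ^ α * x i ^ (1 - α) * u i) := by
    have : ∀ i, x i * fderiv ℝ (falpha α w p) x (Pi.single i 1) * u i
        = ∑ k, w k * (-(S k)⁻¹ * (p k i ^ α * x i ^ (1 - α) * u i)) := by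
      intro i
      rw [falpha_fderiv_apply α w p hp' x hx i, Finset.mul_sum, Finset.sum_mul]
      refine Finset.sum_congr rfl fun k _ => ?_
      have hxpow : x i ^ (1 - α - 1) * x i = x i ^ (1 - α) := by
        rw [← Real.rpow_add_one (hx i).ne' (1 - α - 1)]
        congr 1
        ring
      have hc : (α - 1)⁻¹ * (1 - α) = -1 := by
        field_simp
        ring
      calc x i * (w k * ((α - 1)⁻¹ * ((S k)⁻¹ *
              (p k i ^ α * ((1 - α) * x i ^ (1 - α - 1)))))) * u i
          = w k * (((α - 1)⁻¹ * (1 - α)) * ((S k)⁻¹ *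
              (p k i ^ α * (x i ^ (1 - α - 1) * x i) * u i))) := by ring
        _ = w k * (-(S k)⁻¹ * (p k i ^ α * x i ^ (1 - α) * u i)) := by
            rw [hxpow, hc]; ring
    rw [Finset.sum_congr rfl fun i _ => this i, Finset.sum_comm]
    refine Finset.sum_congr rfl fun k _ => ?_
    rw [Finset.mul_sum, Finset.mul_sum]
    try (refine Finset.sum_congr rfl fun i _ => ?_; ring)
  -- combine
  have hsum : falpha α w p y ≤ ∑ k, w k * ((α - 1)⁻¹ * Real.log (S k)
      + (-(S k)⁻¹ * ∑ i, p k i ^ α * x i ^ (1 - α) * u i)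
      + (|1 - α| / 2) * ∑ i, u i ^ 2) := by
    unfold falpha
    exact Finset.sum_le_sum fun k _ => mul_le_mul_of_nonneg_left (hk k) (hw k)
  calc falpha α w p y ≤ _ := hsum
    _ = falpha α w p x
        + ∑ i, x i * fderiv ℝ (falpha α w p) x (Pi.single i 1) * u i
        + (|1 - α| / 2) * ∑ i, u i ^ 2 := by
      rw [hmid]
      unfold falpha
      simp only [hS_def]
      have hC : (|1 - α| / 2) * ∑ i, u i ^ 2
          = ∑ k, w k * ((|1 - α| / 2) * ∑ i, u i ^ 2) := by
        rw [← Finset.sum_mul, hw1, one_mul]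
      conv_rhs => rw [hC, ← Finset.sum_add_distrib, ← Finset.sum_add_distrib]
      refine Finset.sum_congr rfl fun k _ => ?_
      ring
end

section
/- The linear function x ↦ ⟨1, x⟩ = Σ_i x_i is geodesically 1-smooth with respect to the Poincaré metric on the set {x ∈ R^N_{++} : x ≤ 1}: for any geodesic γ(t) = x^{1-t} ⊙ y^t with x, y in this set, (d²/dt²) Σ_i γ_i(t) = Σ_i γ_i(t)(log(y_i/x_i))² ≤ ‖log(y⊘x)‖₂². -/
open scoped BigOperators

lemma key_form (a b : ℝ) (ha : 0 < a) (hb : 0 < b) (s : ℝ) :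
    a ^ (1 - s) * b ^ s = a * Real.exp (s * Real.log (b / a)) := by
  rw [Real.rpow_def_of_pos ha, Real.rpow_def_of_pos hb, ← Real.exp_add,
    Real.log_div hb.ne' ha.ne']
  conv_rhs => rw [← Real.exp_log ha, ← Real.exp_add]
  rw [Real.log_exp]
  congr 1
  ring

/-- The linear function `x ↦ ∑ i, x i` is geodesically 1-smooth on
`{x ∈ ℝᴺ₊₊ : x ≤ 1}` w.r.t. the Poincaré metric: along the geodesic `γ t = x^(1-t) ⊙ y^t`,
`(d²/dt²) ∑ i, γ t i = ∑ i, γ t i * (log (y i / x i))² ≤ ‖log (y ⊘ x)‖₂²`. -/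
theorem stmt_8 (N : ℕ) (x y : Fin N → ℝ)
    (hx : ∀ i, 0 < x i) (hx1 : ∀ i, x i ≤ 1)
    (hy : ∀ i, 0 < y i) (hy1 : ∀ i, y i ≤ 1)
    (t : ℝ) (ht : t ∈ Set.Icc (0:ℝ) 1) :
    deriv (deriv fun s : ℝ => ∑ i, x i ^ (1 - s) * y i ^ s) t
      = ∑ i, (x i ^ (1 - t) * y i ^ t) * Real.log (y i / x i) ^ 2 ∧
    ∑ i, (x i ^ (1 - t) * y i ^ t) * Real.log (y i / x i) ^ 2
      ≤ ∑ i, Real.log (y i / x i) ^ 2 := by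
  set c : Fin N → ℝ := fun i => Real.log (y i / x i) with hc
  have hrw : (fun s : ℝ => ∑ i, x i ^ (1 - s) * y i ^ s)
      = fun s : ℝ => ∑ i, x i * Real.exp (s * c i) := by
    funext s
    exact Finset.sum_congr rfl fun i _ => key_form _ _ (hx i) (hy i) s
  have hd1 : ∀ s : ℝ, HasDerivAt (fun s : ℝ => ∑ i, x i * Real.exp (s * c i))
      (∑ i, x i * c i * Real.exp (s * c i)) s := by
    intro s
    apply HasDerivAt.fun_sum
    intro i _
    have : HasDerivAt (fun s : ℝ => Real.exp (s * c i)) (Real.exp (s * c i) * c i) s := by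
      have h1 : HasDerivAt (fun s : ℝ => s * c i) (c i) s := by
        simpa using (hasDerivAt_id s).mul_const (c i)
      exact h1.exp
    have := this.const_mul (x i)
    convert this using 1
    · rfl
    ring
  have hderiv1 : deriv (fun s : ℝ => ∑ i, x i * Real.exp (s * c i))
      = fun s : ℝ => ∑ i, x i * c i * Real.exp (s * c i) := by
    funext s; exact (hd1 s).deriv
  have hd2 : HasDerivAt (fun s : ℝ => ∑ i, x i * c i * Real.exp (s * c i))
      (∑ i, x i * c i ^ 2 * Real.exp (t * c i)) t := by
    apply HasDerivAt.fun_sum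
    intro i _
    have : HasDerivAt (fun s : ℝ => Real.exp (s * c i)) (Real.exp (t * c i) * c i) t := by
      have h1 : HasDerivAt (fun s : ℝ => s * c i) (c i) t := by
        simpa using (hasDerivAt_id t).mul_const (c i)
      exact h1.exp
    have := this.const_mul (x i * c i)
    convert this using 1
    · rfl
    ring
  constructor
  · rw [hrw, hderiv1, hd2.deriv]
    refine Finset.sum_congr rfl fun i _ => ?_
    rw [key_form _ _ (hx i) (hy i) t]
    ring
  · apply Finset.sum_le_sum
    intro i _
    have h1 : x i ^ (1 - t) * y i ^ t ≤ 1 := by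
      have h1t : (0:ℝ) ≤ 1 - t := by linarith [ht.2]
      exact mul_le_one₀ (Real.rpow_le_one (hx i).le (hx1 i) h1t)
        (Real.rpow_nonneg (hy i).le t) (Real.rpow_le_one (hy i).le (hy1 i) ht.1)
    exact mul_le_of_le_one_left (sq_nonneg _) h1
end

section
/- For the RGD iteration x_{t+1} = x_t ⊙ exp(−η x_t ⊙ ∇g_α(x_t)) with η = 1/(|1−α|+1) and x₁ ∈ Δ^N_+, every iterate satisfies x_t ≤ 1 entrywise. -/
open scoped BigOperators

/-- `g_α(x) = ⟨1, x⟩ + f_α(x)`. -/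
noncomputable def galpha {N M : ℕ} (α : ℝ) (w : Fin M → ℝ) (p : Fin M → Fin N → ℝ)
    (x : Fin N → ℝ) : ℝ :=
  (∑ i, x i) + falpha α w p x


open Real

lemma galpha_fderiv_single {N M : ℕ} (α : ℝ)
    (w : Fin M → ℝ) (p : Fin M → Fin N → ℝ) (hp : ∀ k i, 0 < p k i)
    (y : Fin N → ℝ) (hy : ∀ j, 0 < y j) (i : Fin N) :
    fderiv ℝ (galpha α w p) y (Pi.single i 1)
      = 1 + ∑ k, w k * ((α - 1)⁻¹ *
          ((∑ j, p k j ^ α * y j ^ (1 - α))⁻¹ *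
            (p k i ^ α * ((1 - α) * y i ^ (1 - α - 1))))) := by
  have hSpos : ∀ k, 0 < ∑ j, p k j ^ α * y j ^ (1 - α) := by
    intro k
    haveI : Nonempty (Fin N) := ⟨i⟩
    apply Finset.sum_pos (fun j _ => ?_) Finset.univ_nonempty
    exact mul_pos (Real.rpow_pos_of_pos (hp k j) _) (Real.rpow_pos_of_pos (hy j) _)
  have hS : ∀ k, HasFDerivAt (fun z : Fin N → ℝ => ∑ j, p k j ^ α * z j ^ (1 - α))
      (∑ j, (p k j ^ α) • (((1 - α) * y j ^ (1 - α - 1)) •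
        (ContinuousLinearMap.proj j : (Fin N → ℝ) →L[ℝ] ℝ))) y := by
    intro k
    exact HasFDerivAt.fun_sum fun j _ =>
      ((hasFDerivAt_apply (𝕜 := ℝ) j y).rpow_const (Or.inl (hy j).ne')).const_mul _
  have hg : HasFDerivAt (galpha α w p)
      ((∑ j, (ContinuousLinearMap.proj j : (Fin N → ℝ) →L[ℝ] ℝ))
        + ∑ k, (w k) • ((α - 1)⁻¹ • ((∑ j, p k j ^ α * y j ^ (1 - α))⁻¹ •
            (∑ j, (p k j ^ α) • (((1 - α) * y j ^ (1 - α - 1)) •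
              (ContinuousLinearMap.proj j : (Fin N → ℝ) →L[ℝ] ℝ)))))) y := by
    unfold galpha falpha
    exact (HasFDerivAt.fun_sum fun j _ => hasFDerivAt_apply (𝕜 := ℝ) j y).add
      (HasFDerivAt.fun_sum fun k _ =>
        ((((hS k).log (hSpos k).ne').const_mul ((α - 1)⁻¹)).const_mul (w k)))
  rw [hg.fderiv]
  simp only [ContinuousLinearMap.add_apply, ContinuousLinearMap.sum_apply,
    ContinuousLinearMap.smul_apply, ContinuousLinearMap.proj_apply, smul_eq_mul,
    Pi.single_apply, mul_ite, mul_one, mul_zero, Finset.sum_ite_eq', Finset.mem_univ,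
    if_true]

lemma key_lb {N M : ℕ} (α : ℝ) (hα1 : α ≠ 1)
    (w : Fin M → ℝ) (hw : ∀ k, 0 ≤ w k) (hw1 : ∑ k, w k = 1)
    (p : Fin M → Fin N → ℝ) (hp : ∀ k i, 0 < p k i)
    (y : Fin N → ℝ) (hy : ∀ j, 0 < y j) (i : Fin N) :
    y i - 1 ≤ y i * fderiv ℝ (galpha α w p) y (Pi.single i 1) := by
  have hSpos : ∀ k, 0 < ∑ j, p k j ^ α * y j ^ (1 - α) := by
    intro k
    haveI : Nonempty (Fin N) := ⟨i⟩
    apply Finset.sum_pos (fun j _ => ?_) Finset.univ_nonempty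
    exact mul_pos (Real.rpow_pos_of_pos (hp k j) _) (Real.rpow_pos_of_pos (hy j) _)
  rw [galpha_fderiv_single α w p hp y hy i]
  have hcoef : ∀ k : Fin M, y i * (w k * ((α - 1)⁻¹ *
      ((∑ j, p k j ^ α * y j ^ (1 - α))⁻¹ * (p k i ^ α * ((1 - α) * y i ^ (1 - α - 1))))))
      = -(w k * (p k i ^ α * y i ^ (1 - α) / ∑ j, p k j ^ α * y j ^ (1 - α))) := by
    intro k
    have h1 : (α - 1)⁻¹ * (1 - α) = -1 := by
      rw [show (1 - α) = -(α - 1) by ring, mul_neg, inv_mul_cancel₀ (sub_ne_zero.2 hα1)]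
    have h2 : y i * y i ^ (1 - α - 1) = y i ^ (1 - α) := by
      nth_rewrite 1 [← Real.rpow_one (y i)]
      rw [← Real.rpow_add (hy i)]
      ring_nf
    rw [div_eq_mul_inv]
    linear_combination (w k * (α - 1)⁻¹ * (∑ j, p k j ^ α * y j ^ (1 - α))⁻¹ *
        p k i ^ α * (1 - α)) * h2
      + (w k * (∑ j, p k j ^ α * y j ^ (1 - α))⁻¹ * p k i ^ α * y i ^ (1 - α)) * h1
  rw [mul_add, mul_one, Finset.mul_sum]
  have hsum : ∑ k, y i * (w k * ((α - 1)⁻¹ *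
      ((∑ j, p k j ^ α * y j ^ (1 - α))⁻¹ * (p k i ^ α * ((1 - α) * y i ^ (1 - α - 1))))))
      = -∑ k, w k * (p k i ^ α * y i ^ (1 - α) / ∑ j, p k j ^ α * y j ^ (1 - α)) := by
    rw [← Finset.sum_neg_distrib]
    exact Finset.sum_congr rfl fun k _ => hcoef k
  rw [hsum]
  have hb : ∑ k, w k * (p k i ^ α * y i ^ (1 - α) / ∑ j, p k j ^ α * y j ^ (1 - α))
      ≤ ∑ k, w k := by
    apply Finset.sum_le_sum
    intro k _
    have hle : p k i ^ α * y i ^ (1 - α) ≤ ∑ j, p k j ^ α * y j ^ (1 - α) :=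
      Finset.single_le_sum (f := fun j => p k j ^ α * y j ^ (1 - α))
        (fun j _ => le_of_lt (mul_pos (Real.rpow_pos_of_pos (hp k j) _)
          (Real.rpow_pos_of_pos (hy j) _))) (Finset.mem_univ i)
    calc w k * (p k i ^ α * y i ^ (1 - α) / ∑ j, p k j ^ α * y j ^ (1 - α))
        ≤ w k * 1 := by
          apply mul_le_mul_of_nonneg_left _ (hw k)
          exact (div_le_one (hSpos k)).2 hle
      _ = w k := mul_one _
  rw [hw1] at hb
  linarith

/-- The RGD iterates `x_{t+1} = x_t ⊙ exp(-η x_t ⊙ ∇g_α(x_t))` with step size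
`η = 1/(|1-α|+1)`, started at a point of the relative interior of the simplex, satisfy
`x_t ≤ 1` entrywise. -/
theorem stmt_10 (N M : ℕ) (α : ℝ) (hα : 0 < α) (hα1 : α ≠ 1)
    (w : Fin M → ℝ) (hw : ∀ k, 0 ≤ w k) (hw1 : ∑ k, w k = 1)
    (p : Fin M → Fin N → ℝ) (hp : ∀ k, (∀ i, 0 < p k i) ∧ ∑ i, p k i = 1)
    (x : ℕ → Fin N → ℝ)
    (h1 : (∀ i, 0 < x 0 i) ∧ ∑ i, x 0 i = 1)
    (hrec : ∀ t i, x (t + 1) i = x t i *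
      Real.exp (-(|1 - α| + 1)⁻¹ * (x t i * fderiv ℝ (galpha α w p) (x t) (Pi.single i 1)))) :
    ∀ t i, x t i ≤ 1 := by
  have hp' : ∀ k i, 0 < p k i := fun k => (hp k).1
  set η : ℝ := (|1 - α| + 1)⁻¹ with hη
  have hηpos : 0 < η := inv_pos.2 (by positivity)
  have hηle : η ≤ 1 := by
    rw [hη]
    apply inv_le_one_of_one_le₀
    linarith [abs_nonneg (1 - α)]
  have main : ∀ t, (∀ i, 0 < x t i) ∧ (∀ i, x t i ≤ 1) := by
    intro t
    induction t with
    | zero =>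
      refine ⟨h1.1, fun i => ?_⟩
      rw [← h1.2]
      exact Finset.single_le_sum (fun j _ => (h1.1 j).le) (Finset.mem_univ i)
    | succ t ih =>
      obtain ⟨hpos, hle⟩ := ih
      constructor
      · intro i
        rw [hrec t i]
        exact mul_pos (hpos i) (Real.exp_pos _)
      · intro i
        rw [hrec t i]
        have hkey := key_lb α hα1 w hw hw1 p hp' (x t) hpos i
        have h3 : -η * (x t i * fderiv ℝ (galpha α w p) (x t) (Pi.single i 1))
            ≤ 1 - x t i := by
          have h4 : -η * (x t i * fderiv ℝ (galpha α w p) (x t) (Pi.single i 1))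
              ≤ -η * (x t i - 1) := by
            apply mul_le_mul_of_nonpos_left hkey (by linarith)
          have h5 : -η * (x t i - 1) = η * (1 - x t i) := by ring
          have h6 : η * (1 - x t i) ≤ 1 * (1 - x t i) :=
            mul_le_mul_of_nonneg_right hηle (by linarith [hle i])
          linarith
        calc x t i * Real.exp (-η * (x t i * fderiv ℝ (galpha α w p) (x t) (Pi.single i 1)))
            ≤ x t i * Real.exp (1 - x t i) := by
              apply mul_le_mul_of_nonneg_left (Real.exp_le_exp.2 h3) (hpos i).le
          _ ≤ 1 := by
              have := Real.log_le_sub_one_of_pos (hpos i)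
              have h7 : Real.exp (1 - x t i) ≤ Real.exp (-Real.log (x t i)) := by
                apply Real.exp_le_exp.2; linarith
              rw [Real.exp_neg, Real.exp_log (hpos i)] at h7
              calc x t i * Real.exp (1 - x t i) ≤ x t i * (x t i)⁻¹ :=
                    mul_le_mul_of_nonneg_left h7 (hpos i).le
                _ = 1 := mul_inv_cancel₀ (hpos i).ne'
  exact fun t i => (main t).2 i
end

section
/- For x ∈ (0,1]^N, each coordinate of the Riemannian gradient of g_α satisfies x_i (∂g_α/∂x_i)(x) ≥ x_i − 1, which implies the multiplicative update x_i exp(−η x_i ∂g_α/∂x_i(x)) ≤ x_i exp(η(1−x_i)) ≤ 1 for η ≤ 1. -/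
open scoped BigOperators

lemma galpha_hasFDerivAt {N M : ℕ} (α : ℝ)
    (w : Fin M → ℝ) (p : Fin M → Fin N → ℝ) (hp : ∀ k i, 0 < p k i)
    (x : Fin N → ℝ) (hx : ∀ i, 0 < x i) (hne : Nonempty (Fin N)) :
    HasFDerivAt (galpha α w p)
      ((∑ i, ContinuousLinearMap.proj (R := ℝ) (φ := fun _ : Fin N => ℝ) i) +
        ∑ k, w k • ((α - 1)⁻¹ •
          ((∑ j, p k j ^ α * x j ^ (1 - α))⁻¹ •
            ∑ j, (p k j ^ α) • (((1 - α) * x j ^ (1 - α - 1)) •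
              ContinuousLinearMap.proj (R := ℝ) (φ := fun _ : Fin N => ℝ) j)))) x := by
  have hS : ∀ k, (0:ℝ) < ∑ j, p k j ^ α * x j ^ (1 - α) := by
    intro k
    apply Finset.sum_pos
    · intro j _
      exact mul_pos (Real.rpow_pos_of_pos (hp k j) α) (Real.rpow_pos_of_pos (hx j) (1 - α))
    · haveI := hne; exact Finset.univ_nonempty
  have hSk : ∀ k, HasFDerivAt (fun y : Fin N → ℝ => ∑ j, p k j ^ α * y j ^ (1 - α))
      (∑ j, (p k j ^ α) • (((1 - α) * x j ^ (1 - α - 1)) •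
        ContinuousLinearMap.proj (R := ℝ) (φ := fun _ : Fin N => ℝ) j)) x := by
    intro k
    apply HasFDerivAt.fun_sum
    intro j _
    exact ((ContinuousLinearMap.proj (R := ℝ) (φ := fun _ : Fin N => ℝ) j).hasFDerivAt.rpow_const
      (Or.inl (hx j).ne')).const_mul _
  have hf : HasFDerivAt (falpha α w p)
      (∑ k, w k • ((α - 1)⁻¹ •
          ((∑ j, p k j ^ α * x j ^ (1 - α))⁻¹ •
            ∑ j, (p k j ^ α) • (((1 - α) * x j ^ (1 - α - 1)) •
              ContinuousLinearMap.proj (R := ℝ) (φ := fun _ : Fin N => ℝ) j)))) x := by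
    apply HasFDerivAt.fun_sum
    intro k _
    exact (((hSk k).log (hS k).ne').const_mul _).const_mul _
  have hlin : HasFDerivAt (fun y : Fin N → ℝ => ∑ i, y i)
      (∑ i, ContinuousLinearMap.proj (R := ℝ) (φ := fun _ : Fin N => ℝ) i) x := by
    apply HasFDerivAt.fun_sum
    intro i _
    exact (ContinuousLinearMap.proj (R := ℝ) (φ := fun _ : Fin N => ℝ) i).hasFDerivAt
  exact hlin.add hf

/-- For `x ∈ (0,1]^N`, each coordinate of the Riemannian gradient of `g_α` satisfies
`x i * ∂ᵢ g_α(x) ≥ x i - 1`; consequently, for step size `η ∈ (0,1]`, the multiplicative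
update satisfies `x i * exp(-η * x i * ∂ᵢ g_α(x)) ≤ x i * exp(η (1 - x i)) ≤ 1`. -/
theorem stmt_11 (N M : ℕ) (α : ℝ) (hα : 0 < α) (hα1 : α ≠ 1)
    (w : Fin M → ℝ) (hw : ∀ k, 0 ≤ w k) (hw1 : ∑ k, w k = 1)
    (p : Fin M → Fin N → ℝ) (hp : ∀ k, (∀ i, 0 < p k i) ∧ ∑ i, p k i = 1)
    (x : Fin N → ℝ) (hx : ∀ i, 0 < x i) (hx1 : ∀ i, x i ≤ 1)
    (η : ℝ) (hη : 0 < η) (hη1 : η ≤ 1) :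
    ∀ i, x i - 1 ≤ x i * fderiv ℝ (galpha α w p) x (Pi.single i 1) ∧
      x i * Real.exp (-η * (x i * fderiv ℝ (galpha α w p) x (Pi.single i 1)))
        ≤ x i * Real.exp (η * (1 - x i)) ∧
      x i * Real.exp (η * (1 - x i)) ≤ 1 := by
  intro i
  haveI : Nonempty (Fin N) := ⟨i⟩
  have ha : α - 1 ≠ 0 := sub_ne_zero.mpr hα1
  have hS : ∀ k, (0:ℝ) < ∑ j, p k j ^ α * x j ^ (1 - α) := by
    intro k
    apply Finset.sum_pos
    · intro j _
      exact mul_pos (Real.rpow_pos_of_pos ((hp k).1 j) α) (Real.rpow_pos_of_pos (hx j) (1 - α))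
    · exact Finset.univ_nonempty
  have hd : fderiv ℝ (galpha α w p) x (Pi.single i 1) =
      1 + ∑ k, w k * ((α - 1)⁻¹ * ((∑ j, p k j ^ α * x j ^ (1 - α))⁻¹ *
        (p k i ^ α * ((1 - α) * x i ^ (1 - α - 1))))) := by
    rw [(galpha_hasFDerivAt α w p (fun k => (hp k).1) x hx ⟨i⟩).fderiv]
    simp [ContinuousLinearMap.sum_apply, Pi.single_apply, Finset.mul_sum, mul_ite]
  have hxpow : x i * x i ^ (1 - α - 1) = x i ^ (1 - α) := by
    calc x i * x i ^ (1 - α - 1) = x i ^ (1:ℝ) * x i ^ (1 - α - 1) := by rw [Real.rpow_one]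
    _ = x i ^ (1 + (1 - α - 1)) := (Real.rpow_add (hx i) _ _).symm
    _ = x i ^ (1 - α) := by ring_nf
  set T : ℝ := ∑ k, w k * ((∑ j, p k j ^ α * x j ^ (1 - α))⁻¹ * (p k i ^ α * x i ^ (1 - α)))
    with hTdef
  have hmain : x i * fderiv ℝ (galpha α w p) x (Pi.single i 1) = x i - T := by
    have hterm_eq : ∀ k, x i * (w k * ((α - 1)⁻¹ * ((∑ j, p k j ^ α * x j ^ (1 - α))⁻¹ *
        (p k i ^ α * ((1 - α) * x i ^ (1 - α - 1)))))) =
        -(w k * ((∑ j, p k j ^ α * x j ^ (1 - α))⁻¹ * (p k i ^ α * x i ^ (1 - α)))) := by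
      intro k
      have hm1 : (α - 1)⁻¹ * (1 - α) = -1 := by field_simp; ring
      calc x i * (w k * ((α - 1)⁻¹ * ((∑ j, p k j ^ α * x j ^ (1 - α))⁻¹ *
            (p k i ^ α * ((1 - α) * x i ^ (1 - α - 1)))))) =
          (w k * ((∑ j, p k j ^ α * x j ^ (1 - α))⁻¹ *
            (p k i ^ α * (x i * x i ^ (1 - α - 1))))) * ((α - 1)⁻¹ * (1 - α)) := by ring
      _ = -(w k * ((∑ j, p k j ^ α * x j ^ (1 - α))⁻¹ * (p k i ^ α * x i ^ (1 - α)))) := by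
          rw [hxpow, hm1]; ring
    rw [hd, mul_add, mul_one, Finset.mul_sum]
    simp only [hterm_eq]
    rw [Finset.sum_neg_distrib, hTdef]
    ring
  have hT0 : 0 ≤ T := by
    apply Finset.sum_nonneg
    intro k _
    apply mul_nonneg (hw k)
    apply mul_nonneg (inv_nonneg.mpr (hS k).le)
    exact mul_nonneg (Real.rpow_pos_of_pos ((hp k).1 i) α).le
      (Real.rpow_pos_of_pos (hx i) (1 - α)).le
  have hT1 : T ≤ 1 := by
    rw [← hw1]
    apply Finset.sum_le_sum
    intro k _
    have hterm : p k i ^ α * x i ^ (1 - α) ≤ ∑ j, p k j ^ α * x j ^ (1 - α) := by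
      apply Finset.single_le_sum (f := fun j => p k j ^ α * x j ^ (1 - α))
      · intro j _
        exact mul_nonneg (Real.rpow_pos_of_pos ((hp k).1 j) α).le
          (Real.rpow_pos_of_pos (hx j) (1 - α)).le
      · exact Finset.mem_univ i
    have hr : (∑ j, p k j ^ α * x j ^ (1 - α))⁻¹ * (p k i ^ α * x i ^ (1 - α)) ≤ 1 := by
      rw [inv_mul_le_iff₀ (hS k), mul_one]
      exact hterm
    calc w k * ((∑ j, p k j ^ α * x j ^ (1 - α))⁻¹ * (p k i ^ α * x i ^ (1 - α)))
        ≤ w k * 1 := mul_le_mul_of_nonneg_left hr (hw k)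
      _ = w k := mul_one _
  refine ⟨?_, ?_, ?_⟩
  · rw [hmain]; linarith
  · apply mul_le_mul_of_nonneg_left _ (hx i).le
    apply Real.exp_le_exp.mpr
    rw [hmain]
    nlinarith
  · have h1 : Real.exp (η * (1 - x i)) ≤ Real.exp (1 - x i) := by
      apply Real.exp_le_exp.mpr
      nlinarith [hx1 i]
    have h2 : Real.exp (1 - x i) ≤ (x i)⁻¹ := by
      rw [← Real.exp_log (inv_pos.mpr (hx i)), Real.log_inv]
      apply Real.exp_le_exp.mpr
      have := Real.log_le_sub_one_of_pos (hx i)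
      linarith
    calc x i * Real.exp (η * (1 - x i)) ≤ x i * (x i)⁻¹ :=
        mul_le_mul_of_nonneg_left (h1.trans h2) (hx i).le
      _ = 1 := mul_inv_cancel₀ (hx i).ne'
end

section
/- Let f ∈ C¹(R^N_+) be convex in the Euclidean sense and geodesically L-smooth with respect to the Poincaré metric on R^N_{++}. If the RGD iterates x_{t+1} = x_t ⊙ exp(−(1/L) x_t ⊙ ∇f(x_t)) starting from x₁ ∈ R^N_{++} converge to a point x_∞ ∈ R^N_+ (possibly on the boundary), then x_∞ is a minimizer of f on R^N_+. -/
open scoped BigOperators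

set_option maxHeartbeats 1000000 in
/-- Boundary lemma: if `f ∈ C¹(ℝᴺ₊)` is Euclidean convex and geodesically `L`-smooth w.r.t.
the Poincaré metric, and the RGD iterates with step size `1/L` converge to a point
`x_∞ ∈ ℝᴺ₊` (possibly on the boundary), then `x_∞` minimizes `f` over `ℝᴺ₊`. -/
theorem stmt_14 (N : ℕ) (f : (Fin N → ℝ) → ℝ) (L : ℝ) (hL : 0 < L)
    (hC1 : ContDiffOn ℝ 1 f {x : Fin N → ℝ | ∀ i, 0 ≤ x i})
    (hconv : ConvexOn ℝ {x : Fin N → ℝ | ∀ i, 0 ≤ x i} f)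
    (hsmooth : ∀ x y : Fin N → ℝ, (∀ i, 0 < x i) → (∀ i, 0 < y i) →
      f y ≤ f x + (∑ i, (x i * fderiv ℝ f x (Pi.single i 1)) * Real.log (y i / x i))
        + L / 2 * ∑ i, Real.log (y i / x i) ^ 2)
    (x : ℕ → Fin N → ℝ) (hx0 : ∀ i, 0 < x 0 i)
    (hrec : ∀ t i, x (t + 1) i
      = x t i * Real.exp (-L⁻¹ * (x t i * fderiv ℝ f (x t) (Pi.single i 1))))
    (xinf : Fin N → ℝ) (hinf : ∀ i, 0 ≤ xinf i)
    (hlim : Filter.Tendsto x Filter.atTop (nhds xinf)) :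
    ∀ z : Fin N → ℝ, (∀ i, 0 ≤ z i) → f xinf ≤ f z := by
  intro z hz
  set S : Set (Fin N → ℝ) := {x : Fin N → ℝ | ∀ i, 0 ≤ x i} with hSdef
  -- positivity of iterates
  have hpos : ∀ t i, 0 < x t i := by
    intro t
    induction t with
    | zero => exact hx0
    | succ t ih => intro i; rw [hrec]; exact mul_pos (ih i) (Real.exp_pos _)
  have hP : IsOpen {y : Fin N → ℝ | ∀ i, 0 < y i} := by
    have h1 : {y : Fin N → ℝ | ∀ i, 0 < y i}
        = Set.pi Set.univ (fun _ : Fin N => Set.Ioi (0:ℝ)) := by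
      ext y; simp [Set.mem_pi]
    rw [h1]
    exact isOpen_set_pi Set.finite_univ (fun _ _ => isOpen_Ioi)
  have hPS : {y : Fin N → ℝ | ∀ i, 0 < y i} ⊆ S := fun y hy i => (hy i).le
  have hSconv : Convex ℝ S := by
    intro a ha b hb p q hp hq hpq i
    exact add_nonneg (mul_nonneg hp (ha i)) (mul_nonneg hq (hb i))
  have hSud : UniqueDiffOn ℝ S :=
    uniqueDiffOn_convex hSconv
      ⟨1, (hP.subset_interior_iff.2 hPS) (fun i => one_pos)⟩
  have hmemS : ∀ t, x t ∈ S := fun t i => (hpos t i).le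
  have hxinfS : xinf ∈ S := hinf
  set D := fderivWithin ℝ f S with hDdef
  have hDeq : ∀ t, fderiv ℝ f (x t) = D (x t) := by
    intro t
    rw [hDdef, fderivWithin_of_mem_nhds]
    exact Filter.mem_of_superset (hP.mem_nhds (hpos t)) hPS
  have hcont : ContinuousOn D S := hC1.continuousOn_fderivWithin hSud le_rfl
  have htend0 : Filter.Tendsto x Filter.atTop (nhdsWithin xinf S) :=
    tendsto_nhdsWithin_iff.2 ⟨hlim, Filter.Eventually.of_forall hmemS⟩
  have htendD : Filter.Tendsto (fun t => D (x t)) Filter.atTop (nhds (D xinf)) :=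
    Filter.Tendsto.comp (hcont xinf hxinfS) htend0
  have htendDi : ∀ i, Filter.Tendsto (fun t => D (x t) (Pi.single i 1))
      Filter.atTop (nhds (D xinf (Pi.single i 1))) := by
    intro i
    exact ((ContinuousLinearMap.apply ℝ ℝ
      (Pi.single i 1 : Fin N → ℝ)).continuous.tendsto _).comp htendD
  have htendxi : ∀ i, Filter.Tendsto (fun t => x t i) Filter.atTop (nhds (xinf i)) :=
    fun i => ((continuous_apply i).tendsto xinf).comp hlim
  have htendxi1 : ∀ i, Filter.Tendsto (fun t => x (t + 1) i) Filter.atTop (nhds (xinf i)) :=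
    fun i => (htendxi i).comp (Filter.tendsto_add_atTop_nat 1)
  -- key sign facts about the limiting derivative
  have hkey : ∀ i, 0 ≤ D xinf (Pi.single i 1) * (z i - xinf i) := by
    intro i
    set c := D xinf (Pi.single i 1) with hc
    rcases (hinf i).eq_or_lt with h0 | h0
    · -- boundary coordinate: show 0 ≤ c
      rw [← h0, sub_zero]
      rcases le_or_gt 0 c with hc0 | hc0
      · exact mul_nonneg hc0 (hz i)
      · exfalso
        have hev : ∀ᶠ t in Filter.atTop, D (x t) (Pi.single i 1) < c / 2 :=
          (htendDi i).eventually_lt_const (by linarith)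
        obtain ⟨T, hT⟩ := Filter.eventually_atTop.1 hev
        have hmono : ∀ t, T ≤ t → x T i ≤ x t i := by
          intro t ht
          induction t, ht using Nat.le_induction with
          | base => exact le_rfl
          | succ t ht ih =>
            have hstep : x t i ≤ x (t + 1) i := by
              rw [hrec t i, hDeq t]
              have hd : D (x t) (Pi.single i 1) < c / 2 := hT t ht
              have hprod : x t i * D (x t) (Pi.single i 1) ≤ 0 :=
                mul_nonpos_of_nonneg_of_nonpos (hpos t i).le (by linarith)
              have hexp : (1:ℝ) ≤ Real.exp (-L⁻¹ * (x t i * D (x t) (Pi.single i 1))) := by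
                apply Real.one_le_exp
                have : (0:ℝ) < L⁻¹ := inv_pos.2 hL
                nlinarith
              exact le_mul_of_one_le_right (hpos t i).le hexp
            exact le_trans ih hstep
        have hle : x T i ≤ xinf i :=
          ge_of_tendsto (htendxi i) (Filter.eventually_atTop.2 ⟨T, hmono⟩)
        have := hpos T i
        rw [← h0] at hle
        linarith
    · -- interior coordinate: show c = 0
      have hc0 : c = 0 := by
        by_contra hne
        have hxev : ∀ᶠ t in Filter.atTop, xinf i / 2 < x t i :=
          (htendxi i).eventually_const_lt (half_lt_self h0)
        have hLinv : (0:ℝ) < L⁻¹ := inv_pos.2 hL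
        rcases lt_or_gt_of_ne hne with hcneg | hcpos
        · -- c < 0 : iterates grow geometrically, contradiction
          set r := Real.exp (-L⁻¹ * (xinf i / 2 * (c / 2))) with hr
          have hr1 : 1 < r := by
            rw [hr, Real.one_lt_exp_iff]
            nlinarith [mul_pos hLinv (mul_pos (half_pos h0) (show (0:ℝ) < -(c/2) by linarith))]
          have hev2 : ∀ᶠ t in Filter.atTop, x t i * r ≤ x (t + 1) i := by
            filter_upwards [hxev, (htendDi i).eventually_lt_const
              (show c < c / 2 by linarith)] with t hxt hdt
            rw [hrec t i, hDeq t]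
            have h1 : x t i * D (x t) (Pi.single i 1) ≤ xinf i / 2 * (c / 2) := by
              have ha : x t i * D (x t) (Pi.single i 1) ≤ x t i * (c / 2) :=
                mul_le_mul_of_nonneg_left hdt.le (hpos t i).le
              have hb : x t i * (c / 2) ≤ xinf i / 2 * (c / 2) :=
                mul_le_mul_of_nonpos_right hxt.le (by linarith)
              linarith
            have h2 : -L⁻¹ * (xinf i / 2 * (c / 2))
                ≤ -L⁻¹ * (x t i * D (x t) (Pi.single i 1)) :=
              mul_le_mul_of_nonpos_left h1 (by linarith)
            exact mul_le_mul_of_nonneg_left (Real.exp_le_exp.2 h2) (hpos t i).le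
          have hlimle : xinf i * r ≤ xinf i :=
            le_of_tendsto_of_tendsto ((htendxi i).mul_const r) (htendxi1 i) hev2
          nlinarith
        · -- c > 0 : iterates shrink geometrically, contradiction
          set r := Real.exp (-L⁻¹ * (xinf i / 2 * (c / 2))) with hr
          have hr1 : r < 1 := by
            rw [hr, Real.exp_lt_one_iff]
            nlinarith [mul_pos hLinv (mul_pos (half_pos h0) (half_pos hcpos))]
          have hev2 : ∀ᶠ t in Filter.atTop, x (t + 1) i ≤ x t i * r := by
            filter_upwards [hxev, (htendDi i).eventually_const_lt
              (show c / 2 < c by linarith)] with t hxt hdt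
            rw [hrec t i, hDeq t]
            have h1 : xinf i / 2 * (c / 2) ≤ x t i * D (x t) (Pi.single i 1) := by
              have ha : x t i * (c / 2) ≤ x t i * D (x t) (Pi.single i 1) :=
                mul_le_mul_of_nonneg_left hdt.le (hpos t i).le
              have hb : xinf i / 2 * (c / 2) ≤ x t i * (c / 2) :=
                mul_le_mul_of_nonneg_right hxt.le (by linarith)
              linarith
            have h2 : -L⁻¹ * (x t i * D (x t) (Pi.single i 1))
                ≤ -L⁻¹ * (xinf i / 2 * (c / 2)) :=
              mul_le_mul_of_nonpos_left h1 (by linarith)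
            exact mul_le_mul_of_nonneg_left (Real.exp_le_exp.2 h2) (hpos t i).le
          have hlimle : xinf i ≤ xinf i * r :=
            le_of_tendsto_of_tendsto (htendxi1 i) ((htendxi i).mul_const r) hev2
          nlinarith
      rw [hc0, zero_mul]
  -- gradient inequality for the convex function at xinf, within S
  have hdiff : HasFDerivWithinAt f (D xinf) S xinf :=
    ((hC1.differentiableOn one_ne_zero) xinf hxinfS).hasFDerivWithinAt
  set γ : ℝ → (Fin N → ℝ) := fun t => xinf + t • (z - xinf) with hγ
  have hγeq : ∀ t : ℝ, γ t = (1 - t) • xinf + t • z := by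
    intro t; funext j
    simp only [hγ, Pi.add_apply, Pi.smul_apply, Pi.sub_apply, smul_eq_mul]
    ring
  have hγ0 : γ 0 = xinf := by
    rw [hγeq]; funext j
    simp
  have hγd : HasDerivWithinAt γ (z - xinf) (Set.Icc 0 1) 0 := by
    have h := ((hasDerivAt_id (0:ℝ)).smul_const (z - xinf)).const_add xinf
    rw [one_smul] at h
    exact h.hasDerivWithinAt
  have hmaps : Set.MapsTo γ (Set.Icc 0 1) S := by
    intro t ht
    rw [hγeq]
    intro j
    have h1 : (0:ℝ) ≤ 1 - t := by linarith [ht.2]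
    simpa using add_nonneg (mul_nonneg h1 (hinf j)) (mul_nonneg ht.1 (hz j))
  have hcomp : HasDerivWithinAt (f ∘ γ) (D xinf (z - xinf)) (Set.Icc 0 1) 0 :=
    hdiff.comp_hasDerivWithinAt_of_eq 0 hγd hmaps hγ0.symm
  have hslope := hasDerivWithinAt_iff_tendsto_slope.1 hcomp
  have hIoc : Set.Icc (0:ℝ) 1 \ {0} = Set.Ioc 0 1 := by
    ext t
    simp only [Set.mem_diff, Set.mem_Icc, Set.mem_Ioc, Set.mem_singleton_iff]
    constructor
    · rintro ⟨⟨h1, h2⟩, h3⟩; exact ⟨h1.lt_of_ne (Ne.symm h3), h2⟩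
    · rintro ⟨h1, h2⟩; exact ⟨⟨h1.le, h2⟩, (ne_of_gt h1)⟩
  rw [hIoc] at hslope
  haveI hNB : (nhdsWithin (0:ℝ) (Set.Ioc 0 1)).NeBot := by
    refine mem_closure_iff_nhdsWithin_neBot.1 ?_
    rw [closure_Ioc (zero_ne_one)]
    exact ⟨le_rfl, zero_le_one⟩
  have hbound : ∀ᶠ t in nhdsWithin (0:ℝ) (Set.Ioc 0 1),
      slope (f ∘ γ) 0 t ≤ f z - f xinf := by
    filter_upwards [self_mem_nhdsWithin] with t ht
    have hconvt : f (γ t) ≤ (1 - t) * f xinf + t * f z := by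
      rw [hγeq]
      exact hconv.2 hxinfS hz (by linarith [ht.2]) ht.1.le (by ring)
    have hts : slope (f ∘ γ) 0 t = (f (γ t) - f xinf) / t := by
      rw [slope_def_field]
      simp [hγ0]
    rw [hts, div_le_iff₀ ht.1]
    nlinarith
  have hgrad : D xinf (z - xinf) ≤ f z - f xinf := le_of_tendsto hslope hbound
  have hsum : D xinf (z - xinf) = ∑ i, (z i - xinf i) * D xinf (Pi.single i 1) := by
    have h := LinearMap.pi_apply_eq_sum_univ
      ((D xinf : (Fin N → ℝ) →L[ℝ] ℝ) : (Fin N → ℝ) →ₗ[ℝ] ℝ) (z - xinf)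
    simp only [ContinuousLinearMap.coe_coe, smul_eq_mul, Pi.sub_apply] at h
    rw [h]
    refine Finset.sum_congr rfl (fun i _ => ?_)
    congr 2
    funext j
    simp [Pi.single_apply, eq_comm]
  have hnn : 0 ≤ D xinf (z - xinf) := by
    rw [hsum]
    exact Finset.sum_nonneg fun i _ => by
      rw [mul_comm]; exact hkey i
  linarith
end

section
/- For α > 1 and fixed probability vector q ∈ Δ^N_+, along the Poincaré geodesic γ(t) = x^{1−t} ⊙ y^t the function φ(t) = log⟨q^α, γ(t)^{1−α}⟩ satisfies φ''(t) ≤ (1−α)² ‖log(y⊘x)‖₂² · (weighted-variance bound): specifically φ''(t) equals (1−α)² times the variance of log(y⊘x) under the probability weights w_i(t) ∝ q_i^α γ_i(t)^{1−α}, hence 0 ≤ φ''(t) ≤ (1−α)²‖log(y⊘x)‖₂², giving that D_α(q‖·) = φ/(α−1) is geodesically |1−α|-smooth. -/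
open scoped BigOperators

lemma sum_exp_hasDerivAt {N : ℕ} (a b : Fin N → ℝ) (t : ℝ) :
    HasDerivAt (fun s => ∑ i, a i * Real.exp (b i * s))
      (∑ i, a i * b i * Real.exp (b i * t)) t := by
  apply HasDerivAt.fun_sum
  intro i _
  have h := (((hasDerivAt_id t).const_mul (b i)).exp).const_mul (a i)
  exact h.congr_deriv (by simp; ring)


/-- For `α > 1` and a fixed probability vector `q`, along the Poincaré geodesic
`γ t = x^(1-t) ⊙ y^t`, the function `φ t = log ⟨q^α, γ(t)^(1-α)⟩` has second derivative equal
to `(1-α)²` times the variance of `log (y ⊘ x)` under the weights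
`w_i(t) ∝ q_i^α γ_i(t)^(1-α)`; hence `0 ≤ φ'' t ≤ (1-α)² ‖log (y ⊘ x)‖₂²`. -/
theorem stmt_19 (N : ℕ) (α : ℝ) (hα : 1 < α)
    (q : Fin N → ℝ) (hq : ∀ i, 0 < q i) (hq1 : ∑ i, q i = 1)
    (x y : Fin N → ℝ) (hx : ∀ i, 0 < x i) (hy : ∀ i, 0 < y i) (t : ℝ) :
    let γ : ℝ → Fin N → ℝ := fun s i => x i ^ (1 - s) * y i ^ s
    let φ : ℝ → ℝ := fun s => Real.log (∑ i, q i ^ α * γ s i ^ (1 - α))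
    let wgt : ℝ → Fin N → ℝ :=
      fun s i => q i ^ α * γ s i ^ (1 - α) / ∑ j, q j ^ α * γ s j ^ (1 - α)
    deriv (deriv φ) t = (1 - α) ^ 2 *
        ((∑ i, wgt t i * Real.log (y i / x i) ^ 2)
          - (∑ i, wgt t i * Real.log (y i / x i)) ^ 2) ∧
    0 ≤ deriv (deriv φ) t ∧
    deriv (deriv φ) t ≤ (1 - α) ^ 2 * ∑ i, Real.log (y i / x i) ^ 2 := by
  intro γ φ wgt
  have hN : N ≠ 0 := by rintro rfl; simp at hq1
  haveI : Nonempty (Fin N) := Fin.pos_iff_nonempty.mp (Nat.pos_of_ne_zero hN)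
  have hα0 : (0:ℝ) ≤ (1 - α) ^ 2 := sq_nonneg _
  set L : Fin N → ℝ := fun i => Real.log (y i / x i) with hLdef
  set a : Fin N → ℝ := fun i => q i ^ α * x i ^ (1 - α) with hadef
  set b : Fin N → ℝ := fun i => (1 - α) * L i with hbdef
  have ha : ∀ i, 0 < a i := fun i =>
    mul_pos (Real.rpow_pos_of_pos (hq i) _) (Real.rpow_pos_of_pos (hx i) _)
  -- key pointwise identity
  have hγ : ∀ s i, q i ^ α * γ s i ^ (1 - α) = a i * Real.exp (b i * s) := by
    intro s i
    have hxi := hx i; have hyi := hy i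
    have h1 : γ s i = Real.exp (Real.log (x i) * (1 - s) + Real.log (y i) * s) := by
      simp only [γ]
      rw [Real.exp_add, ← Real.rpow_def_of_pos hxi, ← Real.rpow_def_of_pos hyi]
    have h2 : γ s i ^ (1 - α) =
        Real.exp ((Real.log (x i) * (1 - s) + Real.log (y i) * s) * (1 - α)) := by
      rw [h1, Real.rpow_def_of_pos (Real.exp_pos _), Real.log_exp]
    have h3 : x i ^ (1 - α) = Real.exp (Real.log (x i) * (1 - α)) :=
      Real.rpow_def_of_pos hxi _
    have h4 : L i = Real.log (y i) - Real.log (x i) := by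
      simp only [hLdef]; exact Real.log_div hyi.ne' hxi.ne'
    rw [h2, hadef]
    simp only [hbdef, h4, h3]
    rw [mul_assoc, ← Real.exp_add]
    congr 2
    ring
  set f : ℝ → ℝ := fun s => ∑ i, a i * Real.exp (b i * s) with hfdef
  have hfpos : ∀ s, 0 < f s := fun s =>
    Finset.sum_pos (fun i _ => mul_pos (ha i) (Real.exp_pos _)) Finset.univ_nonempty
  have hφ : φ = fun s => Real.log (f s) := by
    funext s
    simp only [φ, hfdef]
    congr 1
    exact Finset.sum_congr rfl fun i _ => hγ s i
  have hderiv1 : ∀ s, HasDerivAt φ ((∑ i, a i * b i * Real.exp (b i * s)) / f s) s := by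
    intro s
    rw [hφ]
    exact (sum_exp_hasDerivAt a b s).log (hfpos s).ne'
  have hdφ : deriv φ = fun s => (∑ i, a i * b i * Real.exp (b i * s)) / f s :=
    funext fun s => (hderiv1 s).deriv
  have hnum : HasDerivAt (fun s => ∑ i, a i * b i * Real.exp (b i * s))
      (∑ i, a i * b i * b i * Real.exp (b i * t)) t := by
    have h := sum_exp_hasDerivAt (fun i => a i * b i) b t
    convert h using 2 <;> ring
  have hden : HasDerivAt f (∑ i, a i * b i * Real.exp (b i * t)) t :=
    sum_exp_hasDerivAt a b t
  have hval : deriv (deriv φ) t =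
      ((∑ i, a i * b i * b i * Real.exp (b i * t)) * f t -
        (∑ i, a i * b i * Real.exp (b i * t)) * (∑ i, a i * b i * Real.exp (b i * t)))
        / (f t) ^ 2 := by
    rw [hdφ]
    exact (hnum.div hden (hfpos t).ne').deriv
  -- weights
  have hw : ∀ i, wgt t i = a i * Real.exp (b i * t) / f t := by
    intro i
    simp only [wgt, hfdef]
    rw [hγ t i]
    congr 1
    exact Finset.sum_congr rfl fun j _ => hγ t j
  have hwpos : ∀ i, 0 < wgt t i := fun i => by
    rw [hw i]; exact div_pos (mul_pos (ha i) (Real.exp_pos _)) (hfpos t)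
  have hwsum : ∑ i, wgt t i = 1 := by
    rw [Finset.sum_congr rfl fun i _ => hw i, ← Finset.sum_div]
    exact div_self (hfpos t).ne'
  have hwle : ∀ i, wgt t i ≤ 1 := by
    intro i
    rw [hw i, div_le_one (hfpos t)]
    simp only [hfdef]
    exact Finset.single_le_sum (f := fun j => a j * Real.exp (b j * t))
      (fun j _ => (mul_pos (ha j) (Real.exp_pos _)).le) (Finset.mem_univ i)
  -- sums in terms of P, Q
  have hsum1 : ∑ i, wgt t i * L i = (∑ i, a i * Real.exp (b i * t) * L i) / f t := by
    rw [Finset.sum_div]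
    exact Finset.sum_congr rfl fun i _ => by rw [hw i]; ring
  have hsum2 : ∑ i, wgt t i * L i ^ 2
      = (∑ i, a i * Real.exp (b i * t) * L i ^ 2) / f t := by
    rw [Finset.sum_div]
    exact Finset.sum_congr rfl fun i _ => by rw [hw i]; ring
  have hB : ∑ i, a i * b i * Real.exp (b i * t)
      = (1 - α) * ∑ i, a i * Real.exp (b i * t) * L i := by
    rw [Finset.mul_sum]
    exact Finset.sum_congr rfl fun i _ => by simp only [hbdef]; ring
  have hA : ∑ i, a i * b i * b i * Real.exp (b i * t)
      = (1 - α) ^ 2 * ∑ i, a i * Real.exp (b i * t) * L i ^ 2 := by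
    rw [Finset.mul_sum]
    exact Finset.sum_congr rfl fun i _ => by simp only [hbdef]; ring
  have hmain : deriv (deriv φ) t = (1 - α) ^ 2 *
      ((∑ i, wgt t i * L i ^ 2) - (∑ i, wgt t i * L i) ^ 2) := by
    rw [hval, hA, hB, hsum1, hsum2]
    have hS := (hfpos t).ne'
    field_simp
    simp only [mul_comm t (b _)]
    ring
  refine ⟨hmain, ?_, ?_⟩
  · rw [hmain]
    apply mul_nonneg hα0
    set m := ∑ i, wgt t i * L i with hm
    have expand : ∑ i, wgt t i * (L i - m) ^ 2
        = (∑ i, wgt t i * L i ^ 2) - m ^ 2 := by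
      have h1 : ∀ i ∈ Finset.univ, wgt t i * (L i - m) ^ 2
          = wgt t i * L i ^ 2 - 2 * m * (wgt t i * L i) + m ^ 2 * wgt t i :=
        fun i _ => by ring
      rw [Finset.sum_congr rfl h1, Finset.sum_add_distrib, Finset.sum_sub_distrib,
        ← Finset.mul_sum, ← Finset.mul_sum, hwsum, ← hm]
      ring
    rw [← expand]
    exact Finset.sum_nonneg fun i _ => mul_nonneg (hwpos i).le (sq_nonneg _)
  · rw [hmain]
    apply mul_le_mul_of_nonneg_left _ hα0
    have h1 : (∑ i, wgt t i * L i ^ 2) - (∑ i, wgt t i * L i) ^ 2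
        ≤ ∑ i, wgt t i * L i ^ 2 := by
      have := sq_nonneg (∑ i, wgt t i * L i); linarith
    refine h1.trans (Finset.sum_le_sum fun i _ => ?_)
    calc wgt t i * L i ^ 2 ≤ 1 * L i ^ 2 :=
          mul_le_mul_of_nonneg_right (hwle i) (sq_nonneg _)
      _ = L i ^ 2 := one_mul _
end
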